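/- Let α ≥ 0, r ≥ 0, δ > 1, β ∈ {0,1}. Set Λ₋(k) = −(1/2)√(2√(k²+k⁴)+2k²). Then there exists C such that for all t ≥ 1 and k ∈ ℝ, e^{|Λ₋(k)|(t−1)} ∫_t^∞ e^{Λ₋(k)(s−1)} |Λ₋(k)|^β s^{−δ} μ_{α,r}(k,s) ds ≤ C t^{−(δ−1+β)} μ_{α,r}(k,t). -/

import Mathlib

open MeasureTheory

noncomputable def mu (α r k t : ℝ) : ℝ := 1 / (1 + (|k| * t ^ r) ^ α)

noncomputable def LamMinus (k : ℝ) : ℝ := -(1/2) * Real.sqrt (2 * Real.sqrt (k^2 + k^4) + 2 * k^2)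

lemma LamMinus_nonpos (k : ℝ) : LamMinus k ≤ 0 := by
  unfold LamMinus
  have := Real.sqrt_nonneg (2 * Real.sqrt (k^2 + k^4) + 2 * k^2)
  nlinarith

lemma mu_nonneg (α r k : ℝ) {t : ℝ} (ht : 0 ≤ t) : 0 ≤ mu α r k t := by
  unfold mu
  have hx : 0 ≤ |k| * t ^ r := mul_nonneg (abs_nonneg k) (Real.rpow_nonneg ht r)
  have h2 : 0 ≤ (|k| * t ^ r) ^ α := Real.rpow_nonneg hx α
  positivity

lemma mu_anti (α r k : ℝ) (hα : 0 ≤ α) (hr : 0 ≤ r) {t s : ℝ} (ht : 0 ≤ t) (hts : t ≤ s) :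
    mu α r k s ≤ mu α r k t := by
  unfold mu
  have h1 : |k| * t ^ r ≤ |k| * s ^ r :=
    mul_le_mul_of_nonneg_left (Real.rpow_le_rpow ht hts hr) (abs_nonneg k)
  have h2 : (|k| * t ^ r) ^ α ≤ (|k| * s ^ r) ^ α :=
    Real.rpow_le_rpow (by positivity) h1 hα
  have h3 : (0:ℝ) < 1 + (|k| * t ^ r) ^ α := by
    have hx : 0 ≤ |k| * t ^ r := mul_nonneg (abs_nonneg k) (Real.rpow_nonneg ht r)
    have := Real.rpow_nonneg hx α
    linarith
  exact one_div_le_one_div_of_le h3 (by linarith)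

theorem semigroup_Lam_integral_bound (α r δ β : ℝ)
    (hα : 0 ≤ α) (hr : 0 ≤ r) (hδ : 1 < δ) (hβ : β = 0 ∨ β = 1) :
    ∃ C : ℝ, ∀ t k : ℝ, 1 ≤ t →
      Real.exp (|LamMinus k| * (t - 1)) *
          ∫ s in Set.Ioi t, Real.exp (LamMinus k * (s - 1)) * |LamMinus k| ^ β * s ^ (-δ) * mu α r k s
        ≤ C * t ^ (-(δ - 1 + β)) * mu α r k t := by
  rcases hβ with hβ | hβ <;> subst hβ
  · -- β = 0 case, C = 1/(δ-1)
    refine ⟨1/(δ-1), fun t k ht => ?_⟩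
    have ht0 : (0:ℝ) < t := lt_of_lt_of_le one_pos ht
    set l := |LamMinus k| with hl
    have hl0 : 0 ≤ l := abs_nonneg _
    have hLam : LamMinus k = -l := by
      rw [hl, abs_of_nonpos (LamMinus_nonpos k)]; ring
    rw [← MeasureTheory.integral_const_mul]
    have key : ∫ s in Set.Ioi t,
        Real.exp (l * (t-1)) * (Real.exp (LamMinus k * (s - 1)) * l ^ (0:ℝ) * s ^ (-δ) * mu α r k s)
        ≤ ∫ s in Set.Ioi t, mu α r k t * s ^ (-δ) := by
      apply integral_mono_of_nonneg
      · filter_upwards [self_mem_ae_restrict (measurableSet_Ioi (a := t))] with s hs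
        have hs0 : (0:ℝ) < s := lt_trans ht0 hs
        have hmus := mu_nonneg α r k hs0.le
        exact mul_nonneg (Real.exp_pos _).le
          (mul_nonneg (mul_nonneg (mul_nonneg (Real.exp_pos _).le (Real.rpow_nonneg hl0 _))
            (Real.rpow_nonneg hs0.le _)) hmus)
      · exact (integrableOn_Ioi_rpow_of_lt (by linarith) ht0).const_mul _
      · filter_upwards [self_mem_ae_restrict (measurableSet_Ioi (a := t))] with s hs
        have hs0 : (0:ℝ) < s := lt_trans ht0 hs
        have hsp : (0:ℝ) ≤ s ^ (-δ) := Real.rpow_nonneg hs0.le _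
        have hmu : mu α r k s ≤ mu α r k t := mu_anti α r k hα hr ht0.le hs.le
        have hmus := mu_nonneg α r k hs0.le
        have e1 : Real.exp (l * (t-1)) * Real.exp (LamMinus k * (s-1)) ≤ 1 := by
          rw [← Real.exp_add, hLam, Real.exp_le_one_iff]
          nlinarith [(show t < s from hs).le]
        calc Real.exp (l * (t-1)) * (Real.exp (LamMinus k * (s - 1)) * l ^ (0:ℝ) * s ^ (-δ) * mu α r k s)
            = (Real.exp (l * (t-1)) * Real.exp (LamMinus k * (s-1))) * (s ^ (-δ) * mu α r k s) := by
              rw [Real.rpow_zero]; ring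
          _ ≤ 1 * (s ^ (-δ) * mu α r k t) :=
              mul_le_mul e1 (mul_le_mul_of_nonneg_left hmu hsp) (mul_nonneg hsp hmus) one_pos.le
          _ = mu α r k t * s ^ (-δ) := by ring
    refine key.trans ?_
    rw [MeasureTheory.integral_const_mul, integral_Ioi_rpow_of_lt (by linarith) ht0]
    rw [show -(δ - 1 + 0) = -δ + 1 by ring]
    apply le_of_eq
    have h2 : -t ^ (-δ + 1) / (-δ + 1) = 1 / (δ - 1) * t ^ (-δ + 1) := by
      set x := t ^ (-δ + 1) with hx
      rw [show -δ + 1 = -(δ - 1) by ring, div_neg, neg_div, neg_neg, div_eq_mul_inv, one_div,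
        mul_comm]
    rw [h2]; ring
  · -- β = 1 case, C = 1
    refine ⟨1, fun t k ht => ?_⟩
    have ht0 : (0:ℝ) < t := lt_of_lt_of_le one_pos ht
    set l := |LamMinus k| with hl
    have hl0 : 0 ≤ l := abs_nonneg _
    have hLam : LamMinus k = -l := by
      rw [hl, abs_of_nonpos (LamMinus_nonpos k)]; ring
    have hmt := mu_nonneg α r k ht0.le
    have htp : (0:ℝ) ≤ t ^ (-(δ - 1 + 1)) := Real.rpow_nonneg ht0.le _
    rcases eq_or_lt_of_le hl0 with hl0' | hlpos
    · -- l = 0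
      have hz : ∀ s : ℝ, Real.exp (LamMinus k * (s - 1)) * l ^ (1:ℝ) * s ^ (-δ) * mu α r k s = 0 := by
        intro s
        rw [Real.rpow_one, ← hl0']
        ring
      simp only [hz, MeasureTheory.integral_zero, mul_zero]
      rw [one_mul]
      exact mul_nonneg htp hmt
    · -- l > 0
      rw [← MeasureTheory.integral_const_mul]
      have key : ∫ s in Set.Ioi t,
          Real.exp (l * (t-1)) * (Real.exp (LamMinus k * (s - 1)) * l ^ (1:ℝ) * s ^ (-δ) * mu α r k s)
          ≤ ∫ s in Set.Ioi t, (mu α r k t * t ^ (-δ) * l * Real.exp (l * t)) * Real.exp (-(l * s)) := by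
        apply integral_mono_of_nonneg
        · filter_upwards [self_mem_ae_restrict (measurableSet_Ioi (a := t))] with s hs
          have hs0 : (0:ℝ) < s := lt_trans ht0 hs
          have hmus := mu_nonneg α r k hs0.le
          exact mul_nonneg (Real.exp_pos _).le
            (mul_nonneg (mul_nonneg (mul_nonneg (Real.exp_pos _).le (Real.rpow_nonneg hl0 _))
              (Real.rpow_nonneg hs0.le _)) hmus)
        · have : IntegrableOn (fun s : ℝ => Real.exp (-(l * s))) (Set.Ioi t) := by
            simpa [neg_mul] using exp_neg_integrableOn_Ioi t hlpos
          exact this.const_mul _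
        · filter_upwards [self_mem_ae_restrict (measurableSet_Ioi (a := t))] with s hs
          have hs0 : (0:ℝ) < s := lt_trans ht0 hs
          have hmu : mu α r k s ≤ mu α r k t := mu_anti α r k hα hr ht0.le hs.le
          have hmus := mu_nonneg α r k hs0.le
          have hsp : s ^ (-δ) ≤ t ^ (-δ) :=
            Real.rpow_le_rpow_of_nonpos ht0 hs.le (by linarith)
          have hsp0 : (0:ℝ) ≤ s ^ (-δ) := Real.rpow_nonneg hs0.le _
          have e1 : Real.exp (l * (t-1)) * Real.exp (LamMinus k * (s-1))
              = Real.exp (l * t) * Real.exp (-(l * s)) := by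
            rw [← Real.exp_add, ← Real.exp_add, hLam]
            ring_nf
          calc Real.exp (l * (t-1)) * (Real.exp (LamMinus k * (s - 1)) * l ^ (1:ℝ) * s ^ (-δ) * mu α r k s)
              = (Real.exp (l * (t-1)) * Real.exp (LamMinus k * (s-1))) * l * (s ^ (-δ) * mu α r k s) := by
                rw [Real.rpow_one]; ring
            _ = (Real.exp (l * t) * Real.exp (-(l * s))) * l * (s ^ (-δ) * mu α r k s) := by rw [e1]
            _ ≤ (Real.exp (l * t) * Real.exp (-(l * s))) * l * (t ^ (-δ) * mu α r k t) := by
                apply mul_le_mul_of_nonneg_left (mul_le_mul hsp hmu hmus (Real.rpow_nonneg ht0.le _))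
                positivity
            _ = (mu α r k t * t ^ (-δ) * l * Real.exp (l * t)) * Real.exp (-(l * s)) := by ring
      refine key.trans ?_
      rw [MeasureTheory.integral_const_mul]
      have hint : ∫ s in Set.Ioi t, Real.exp (-(l * s)) = l⁻¹ * Real.exp (-(l * t)) := by
        have := MeasureTheory.integral_comp_mul_left_Ioi (fun x => Real.exp (-x)) t hlpos
        simpa [smul_eq_mul, integral_exp_neg_Ioi, integral_exp_Iic] using this
      rw [hint]
      rw [show -(δ - 1 + 1) = -δ by ring]
      apply le_of_eq
      have h1 : mu α r k t * t ^ (-δ) * l * Real.exp (l * t) * (l⁻¹ * Real.exp (-(l * t)))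
          = mu α r k t * t ^ (-δ) * (l * l⁻¹) * (Real.exp (l * t) * Real.exp (-(l * t))) := by ring
      rw [h1, mul_inv_cancel₀ (ne_of_gt hlpos), ← Real.exp_add]
      simp only [mul_one, add_neg_cancel, Real.exp_zero]
      ring
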